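/- arXiv:2101.04069 — 3 statements merged into one kernel-verified Lean document; each statement's English description precedes it below -/
import Mathlib

section
/- Let f = Σ_{α ∈ F'} c_α x^α ∈ ℂ[x₁,…,xₙ] be a Thom–Sebastiani polynomial. Then the extended Jacobian ideal J̃_f = ⟨∂f/∂x₁,…,∂f/∂xₙ, f⟩ equals the ideal generated by the monomials {x^γ : γ ∈ δ(F')}, where δ(F') = {α − e_i : α ∈ F', α_i > 0}. In particular J̃_f is a monomial ideal and f ∈ J_f. -/
open MvPolynomial

/-- `δ(F)`: the set of all `α - e_i` for `α ∈ F` and `i` with `α i > 0`. -/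
def deltaSet {n : ℕ} (F : Set (Fin n → ℕ)) : Set (Fin n → ℕ) :=
  {γ | ∃ α ∈ F, ∃ i : Fin n, α i ≠ 0 ∧ γ = α - Pi.single i 1}

/-- The monomial `x^β` with coefficient `c`, for `β : Fin n → ℕ`. -/
noncomputable def mono {n : ℕ} (β : Fin n → ℕ) (c : ℂ) : MvPolynomial (Fin n) ℂ :=
  monomial (Finsupp.equivFunOnFinite.symm β) c

/-- The Jacobian ideal `J_f = ⟨∂f/∂x₁, …, ∂f/∂xₙ⟩`. -/
noncomputable def jacobianIdeal {n : ℕ} (f : MvPolynomial (Fin n) ℂ) :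
    Ideal (MvPolynomial (Fin n) ℂ) :=
  Ideal.span (Set.range fun i => pderiv i f)

private lemma pderiv_mem {n : ℕ} (f : MvPolynomial (Fin n) ℂ) (i : Fin n) :
    pderiv i f ∈ jacobianIdeal f :=
  Ideal.subset_span ⟨i, rfl⟩

private lemma symm_sub {n : ℕ} (α : Fin n → ℕ) (i : Fin n) :
    Finsupp.equivFunOnFinite.symm (α - Pi.single i 1)
      = Finsupp.equivFunOnFinite.symm α - Finsupp.single i 1 := by
  ext j
  rcases eq_or_ne j i with rfl | h
  · simp
  · simp [Finsupp.single_apply, Pi.single_apply, h, Ne.symm h]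

private lemma pderiv_mono {n : ℕ} (i : Fin n) (β : Fin n → ℕ) (a : ℂ) :
    pderiv i (mono β a) = (a * (β i : ℂ)) • mono (β - Pi.single i 1) 1 := by
  rw [mono, pderiv_monomial, mono, smul_monomial, symm_sub]
  simp

private lemma pderiv_f {n : ℕ} (F' : Finset (Fin n → ℕ)) (c : (Fin n → ℕ) → ℂ)
    (hdisj : (F' : Set (Fin n → ℕ)).Pairwise fun α α' =>
      Disjoint (Function.support α) (Function.support α'))
    (i : Fin n) (α : Fin n → ℕ) (hα : α ∈ F') (hi : α i ≠ 0) :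
    pderiv i (∑ β ∈ F', mono β (c β)) = mono (α - Pi.single i 1) (c α * α i) := by
  rw [map_sum, Finset.sum_eq_single α]
  · rw [pderiv_mono, mono, mono, smul_monomial, smul_eq_mul, mul_one]
  · intro β hβ hne
    have hβi : β i = 0 := by
      by_contra h
      exact (Set.disjoint_left.mp (hdisj hβ hα hne) h) hi
    rw [pderiv_mono, hβi]
    simp
  · intro h; exact absurd hα h

/-- For a Thom–Sebastiani polynomial `f = Σ_{α ∈ F'} c_α x^α`, the extended
Jacobian ideal `J̃_f = J_f + ⟨f⟩` equals the monomial ideal generated by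
`{x^γ : γ ∈ δ(F')}`; in particular it is a monomial ideal and `f ∈ J_f`. -/
theorem thom_sebastiani_extended_jacobian_ideal_monomial {n : ℕ}
    (F' : Finset (Fin n → ℕ)) (c : (Fin n → ℕ) → ℂ)
    (hne : F'.Nonempty) (h0 : ∀ α ∈ F', α ≠ 0) (hc : ∀ α ∈ F', c α ≠ 0)
    (hdisj : (F' : Set (Fin n → ℕ)).Pairwise fun α α' =>
      Disjoint (Function.support α) (Function.support α'))
    (f : MvPolynomial (Fin n) ℂ) (hf : f = ∑ α ∈ F', mono α (c α)) :
    jacobianIdeal f + Ideal.span {f} =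
        Ideal.span ((fun γ => mono γ 1) '' deltaSet (F' : Set (Fin n → ℕ))) ∧
      f ∈ jacobianIdeal f := by
  subst hf
  -- monomials of δ(F') lie in J_f
  have hmemJ : ∀ γ ∈ deltaSet (F' : Set (Fin n → ℕ)),
      mono γ 1 ∈ jacobianIdeal (∑ α ∈ F', mono α (c α)) := by
    rintro γ ⟨α, hα, i, hi, rfl⟩
    have hp := pderiv_f F' c hdisj i α hα hi
    have hcn : c α * (α i : ℂ) ≠ 0 :=
      mul_ne_zero (hc α hα) (Nat.cast_ne_zero.mpr hi)
    have key : mono (α - Pi.single i 1) 1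
        = (c α * (α i : ℂ))⁻¹ • pderiv i (∑ α ∈ F', mono α (c α)) := by
      rw [hp]
      simp only [mono, smul_monomial, smul_eq_mul]
      rw [inv_mul_cancel₀ hcn]
    rw [key]
    exact Submodule.smul_of_tower_mem _ _ (pderiv_mem _ i)
  -- J_f ≤ monomial ideal
  have hJle : jacobianIdeal (∑ α ∈ F', mono α (c α)) ≤
      Ideal.span ((fun γ => mono γ 1) '' deltaSet (F' : Set (Fin n → ℕ))) := by
    rw [jacobianIdeal, Ideal.span_le]
    rintro _ ⟨i, rfl⟩
    show pderiv i (∑ α ∈ F', mono α (c α)) ∈ _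
    rw [map_sum]
    apply Ideal.sum_mem
    intro α hα
    rw [pderiv_mono]
    by_cases hi : α i = 0
    · rw [hi]; simp
    · refine Submodule.smul_of_tower_mem _ _ (Ideal.subset_span ?_)
      exact ⟨α - Pi.single i 1, ⟨α, hα, i, hi, rfl⟩, rfl⟩
  -- f ∈ J_f
  have hfJ : (∑ α ∈ F', mono α (c α)) ∈ jacobianIdeal (∑ α ∈ F', mono α (c α)) := by
    apply Ideal.sum_mem
    intro α hα
    obtain ⟨i, hi⟩ : ∃ i, α i ≠ 0 := Function.ne_iff.mp (h0 α hα)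
    have hp := pderiv_f F' c hdisj i α hα hi
    have key : mono α (c α)
        = ((α i : ℂ))⁻¹ • (pderiv i (∑ α ∈ F', mono α (c α)) * X i) := by
      rw [hp]
      simp only [mono, X, monomial_mul, smul_monomial, smul_eq_mul, mul_one]
      have hs : Finsupp.equivFunOnFinite.symm (α - Pi.single i 1) + Finsupp.single i 1
          = Finsupp.equivFunOnFinite.symm α := by
        ext j
        rcases eq_or_ne j i with rfl | h
        · simp only [Finsupp.add_apply, Finsupp.tsub_apply,
            Finsupp.coe_equivFunOnFinite_symm, Finsupp.single_apply, Pi.sub_apply,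
            Pi.single_apply, if_pos rfl, if_true, Nat.cast_ite, Nat.cast_one, Nat.cast_zero]
          omega
        · simp [Finsupp.single_apply, Pi.single_apply, h, Ne.symm h]
      have hcn : ((α i : ℂ)) ≠ 0 := Nat.cast_ne_zero.mpr hi
      rw [hs, mul_comm (c α), ← mul_assoc, inv_mul_cancel₀ hcn, one_mul]
    rw [key]
    exact Submodule.smul_of_tower_mem _ _
      (Ideal.mul_mem_right _ _ (pderiv_mem _ i))
  refine ⟨?_, hfJ⟩
  have h1 : jacobianIdeal (∑ α ∈ F', mono α (c α)) + Ideal.span {∑ α ∈ F', mono α (c α)}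
      = jacobianIdeal (∑ α ∈ F', mono α (c α)) := by
    rw [Ideal.add_eq_sup, sup_eq_left, Ideal.span_le, Set.singleton_subset_iff]
    exact hfJ
  rw [h1]
  refine le_antisymm hJle ?_
  rw [Ideal.span_le]
  rintro _ ⟨γ, hγ, rfl⟩
  exact hmemJ γ hγ
end

section
/- Let f = Σ_{α ∈ F'} c_α x^α ∈ ℂ[x₁,…,xₙ] be a Thom–Sebastiani polynomial with at least two monomials, i.e. |F'| ≥ 2. Then f is squarefree: for every g ∈ ℂ[x₁,…,xₙ], if g² divides f then g is a unit (a nonzero constant). -/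
open MvPolynomial

/-- Each variable `X j` is prime in `ℂ[x₁,…,xₙ]`. -/
lemma prime_X_mv {n : ℕ} (j : Fin n) : Prime (X j : MvPolynomial (Fin n) ℂ) := by
  let e : MvPolynomial (Fin n) ℂ ≃ₐ[ℂ]
      Polynomial (MvPolynomial {k : Fin n // k ≠ j} ℂ) :=
    (renameEquiv ℂ (Equiv.optionSubtypeNe j).symm).trans
      (optionEquivLeft ℂ {k : Fin n // k ≠ j})
  have he : e (X j) = Polynomial.X := by
    simp only [e, AlgEquiv.trans_apply, renameEquiv_apply, rename_X,
      Equiv.optionSubtypeNe_symm_self, optionEquivLeft_X_none]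
  have := (MulEquiv.prime_iff e.toRingEquiv.toMulEquiv (p := (X j : MvPolynomial (Fin n) ℂ))).mp
  apply this
  rw [show (e.toRingEquiv.toMulEquiv : MvPolynomial (Fin n) ℂ →
      Polynomial (MvPolynomial {k : Fin n // k ≠ j} ℂ)) (X j) = e (X j) from rfl, he]
  exact Polynomial.prime_X

/-- A Thom–Sebastiani polynomial with at least two monomials is squarefree:
any `g` with `g² ∣ f` is a unit. -/
theorem thom_sebastiani_squarefree {n : ℕ}
    (F' : Finset (Fin n → ℕ)) (c : (Fin n → ℕ) → ℂ)
    (hcard : 2 ≤ F'.card) (h0 : ∀ α ∈ F', α ≠ 0) (hc : ∀ α ∈ F', c α ≠ 0)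
    (hdisj : (F' : Set (Fin n → ℕ)).Pairwise fun α α' =>
      Disjoint (Function.support α) (Function.support α'))
    (f : MvPolynomial (Fin n) ℂ) (hf : f = ∑ α ∈ F', mono α (c α)) :
    ∀ g : MvPolynomial (Fin n) ℂ, g ^ 2 ∣ f → IsUnit g := by
  classical
  -- coefficients of `f` at exponents in `F'`
  have hcoeff : ∀ β ∈ F', coeff (Finsupp.equivFunOnFinite.symm β) f = c β := by
    intro β hβ
    rw [hf, coeff_sum, Finset.sum_eq_single β]
    · simp [mono, coeff_monomial]
    · intro γ hγ hne
      have : (Finsupp.equivFunOnFinite.symm γ) ≠ (Finsupp.equivFunOnFinite.symm β) :=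
        fun h => hne (Finsupp.equivFunOnFinite.symm.injective h)
      simp [mono, coeff_monomial, this]
    · intro h; exact absurd hβ h
  -- pick a base point γ₀ ∈ F' and a variable i in its support
  obtain ⟨γ₀, hγ₀⟩ := Finset.card_pos.mp (by omega : 0 < F'.card)
  obtain ⟨i, hi⟩ : ∃ i, γ₀ i ≠ 0 := Function.ne_iff.mp (h0 γ₀ hγ₀)
  have hfne : f ≠ 0 := by
    intro h
    have := hcoeff γ₀ hγ₀
    rw [h] at this
    exact hc γ₀ hγ₀ (by simpa using this.symm)
  intro g hg
  by_contra hu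
  have hgne : g ≠ 0 := by
    rintro rfl
    exact hfne (zero_dvd_iff.mp (by simpa using hg))
  obtain ⟨p, hpirr, hpg⟩ := WfDvdMonoid.exists_irreducible_factor hu hgne
  have hp : Prime p := hpirr.prime
  have hp2f : p ^ 2 ∣ f := dvd_trans (pow_dvd_pow_of_dvd hpg 2) hg
  -- the partial derivative of f in direction i is a single monomial
  have hder : pderiv i f =
      monomial (Finsupp.equivFunOnFinite.symm γ₀ - Finsupp.single i 1)
        (c γ₀ * ((Finsupp.equivFunOnFinite.symm γ₀) i : ℂ)) := by
    rw [hf, map_sum, Finset.sum_eq_single γ₀]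
    · rw [mono, pderiv_monomial]
    · intro γ hγ hne
      have hdj := hdisj hγ hγ₀ hne
      have hγi : γ i = 0 := by
        by_contra h
        exact Set.disjoint_left.mp hdj h hi
      rw [mono, pderiv_monomial]
      have : ((Finsupp.equivFunOnFinite.symm γ) i : ℂ) = 0 := by simp [hγi]
      simp only [this, mul_zero, map_zero]
    · intro h; exact absurd hγ₀ h
  -- p divides the derivative
  have hpd : p ∣ pderiv i f := by
    obtain ⟨w, hw⟩ := hp2f
    rw [hw, pow_two, mul_assoc, Derivation.leibniz]
    simp only [smul_eq_mul]
    exact dvd_add (dvd_mul_right p _) ((dvd_mul_right p w).mul_right _)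
  -- hence p divides a monomial, so p is divisible... p ∣ X j for some j in supp γ₀
  set d : (Fin n) →₀ ℕ := Finsupp.equivFunOnFinite.symm γ₀ - Finsupp.single i 1 with hd
  have hcoef_ne : (c γ₀ * ((Finsupp.equivFunOnFinite.symm γ₀) i : ℂ)) ≠ 0 := by
    apply mul_ne_zero (hc γ₀ hγ₀)
    simpa using hi
  rw [hder, monomial_eq, Finsupp.prod] at hpd
  have hunit : IsUnit (C (c γ₀ * ((Finsupp.equivFunOnFinite.symm γ₀) i : ℂ)) :
      MvPolynomial (Fin n) ℂ) := (isUnit_iff_ne_zero.mpr hcoef_ne).map C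
  have hpprod : p ∣ ∏ j ∈ d.support, X j ^ d j := hunit.dvd_mul_left.mp hpd
  obtain ⟨j, hjmem, hpXj⟩ := hp.exists_mem_finset_dvd hpprod
  have hpX : p ∣ X j := hp.dvd_of_dvd_pow hpXj
  -- j is in the support of γ₀
  have hγ₀j : γ₀ j ≠ 0 := by
    have hdj : d j ≠ 0 := Finsupp.mem_support_iff.mp hjmem
    intro h
    apply hdj
    simp [hd, Finsupp.tsub_apply, h]
  -- X j divides f
  have hXf : X j ∣ f := by
    have hXp : X j ∣ p := hpirr.dvd_symm (prime_X_mv j).irreducible hpX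
    exact hXp.trans (dvd_trans (dvd_pow_self p two_ne_zero) hp2f)
  -- pick another exponent β ∈ F', which avoids variable j
  obtain ⟨β, hβ, hβne⟩ := Finset.exists_mem_ne (lt_of_lt_of_le one_lt_two hcard) γ₀
  have hβj : β j = 0 := by
    by_contra h
    exact Set.disjoint_left.mp (hdisj hβ hγ₀ hβne) h hγ₀j
  -- contradiction via the coefficient of f at β
  obtain ⟨t, ht⟩ := hXf
  have := hcoeff β hβ
  rw [ht, mul_comm, coeff_mul_X'] at this
  have hjn : j ∉ (Finsupp.equivFunOnFinite.symm β).support := by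
    simp [hβj]
  rw [if_neg hjn] at this
  exact hc β hβ this.symm
end

section
/- Let α ∈ ℕ^n with α ≠ 0 and let f = x^α ∈ ℂ[x₁,…,xₙ]. A derivation θ = Σ_{i=1}^n g_i · ∂/∂x_i (g_i ∈ ℂ[x₁,…,xₙ]) satisfies θ(x^α) = 0 if and only if θ belongs to the ℂ[x₁,…,xₙ]-submodule of derivations generated by the derivations α_j · x_i · ∂/∂x_i − α_i · x_j · ∂/∂x_j for i, j ∈ [α], together with the derivations ∂/∂x_k for k ∉ [α]. -/
open MvPolynomial

/-- The algebra map substituting `0` for the variable `i`. -/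
noncomputable def killVar {n : ℕ} (i : Fin n) :
    MvPolynomial (Fin n) ℂ →ₐ[ℂ] MvPolynomial (Fin n) ℂ :=
  aeval (fun j => if j = i then 0 else X j)

lemma killVar_monomial {n : ℕ} (i : Fin n) (t : Fin n →₀ ℕ) (c : ℂ) (ht : t i = 0) :
    killVar i (monomial t c) = monomial t c := by
  rw [killVar, aeval_monomial]
  have h1 : (t.prod fun j k => (if j = i then 0 else X j : MvPolynomial (Fin n) ℂ) ^ k)
      = t.prod fun j k => X j ^ k := by
    apply Finsupp.prod_congr
    intro j hj
    have hji : j ≠ i := by rintro rfl; exact (Finsupp.mem_support_iff.mp hj) ht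
    rw [if_neg hji]
  rw [h1, Finsupp.prod, prod_X_pow_eq_monomial]
  simp [algebraMap_eq, C_mul_monomial]

lemma sub_killVar_mem {n : ℕ} (i : Fin n) (q : MvPolynomial (Fin n) ℂ) :
    q - killVar i q ∈ Ideal.span {(X i : MvPolynomial (Fin n) ℂ)} := by
  induction q using MvPolynomial.induction_on with
  | C a => simp [killVar]
  | add p q hp hq =>
      have heq : p + q - killVar i (p + q)
          = (p - killVar i p) + (q - killVar i q) := by
        rw [map_add]; ring
      rw [heq]
      exact Ideal.add_mem _ hp hq
  | mul_X p j hp =>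
      by_cases hj : j = i
      · have hk : killVar i (p * X j) = 0 := by
          rw [map_mul]
          have : killVar i (X j) = 0 := by simp [killVar, hj]
          rw [this, mul_zero]
        rw [hk, sub_zero]
        exact Ideal.mem_span_singleton.mpr ⟨p, by rw [hj]; ring⟩
      · have hk : killVar i (p * X j) = killVar i p * X j := by
          rw [map_mul]
          have : killVar i (X j) = X j := by simp [killVar, hj]
          rw [this]
        rw [hk]
        have h2 : p * X j - killVar i p * X j = (p - killVar i p) * X j := by ring
        rw [h2]
        exact Ideal.mul_mem_right _ _ hp

lemma X_dvd_iff_killVar {n : ℕ} (i : Fin n) (q : MvPolynomial (Fin n) ℂ) :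
    (X i : MvPolynomial (Fin n) ℂ) ∣ q ↔ killVar i q = 0 := by
  constructor
  · rintro ⟨c, rfl⟩
    rw [map_mul]
    have : killVar i (X i) = 0 := by simp [killVar]
    rw [this, zero_mul]
  · intro h
    have hmem := sub_killVar_mem i q
    rw [h, sub_zero, Ideal.mem_span_singleton] at hmem
    exact hmem

/-- A derivation `θ = Σ_i g_i ∂/∂x_i` (identified with its coefficient vector
`g`) annihilates the monomial `x^α` (`α ≠ 0`) if and only if it lies in the
submodule generated by the derivations `α_j x_i ∂/∂x_i − α_i x_j ∂/∂x_j`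
(`i, j ∈ [α]`) and `∂/∂x_k` (`k ∉ [α]`). -/
theorem annihilator_of_monomial {n : ℕ} (α : Fin n → ℕ) (hα : α ≠ 0)
    (g : Fin n → MvPolynomial (Fin n) ℂ) :
    (∑ i, g i * pderiv i (mono α 1)) = 0 ↔
      g ∈ Submodule.span (MvPolynomial (Fin n) ℂ)
        ({v : Fin n → MvPolynomial (Fin n) ℂ |
            ∃ i j : Fin n, α i ≠ 0 ∧ α j ≠ 0 ∧
              v = Pi.single i (MvPolynomial.C ((α j : ℕ) : ℂ) * X i) -
                  Pi.single j (MvPolynomial.C ((α i : ℕ) : ℂ) * X j)} ∪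
          {v : Fin n → MvPolynomial (Fin n) ℂ |
            ∃ k : Fin n, α k = 0 ∧ v = Pi.single k 1}) := by
  classical
  set s : Fin n →₀ ℕ := Finsupp.equivFunOnFinite.symm α with hs
  have hsa : ∀ i, s i = α i := fun i => rfl
  set Sgen := ({v : Fin n → MvPolynomial (Fin n) ℂ |
            ∃ i j : Fin n, α i ≠ 0 ∧ α j ≠ 0 ∧
              v = Pi.single i (MvPolynomial.C ((α j : ℕ) : ℂ) * X i) -
                  Pi.single j (MvPolynomial.C ((α i : ℕ) : ℂ) * X j)} ∪
          {v : Fin n → MvPolynomial (Fin n) ℂ |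
            ∃ k : Fin n, α k = 0 ∧ v = Pi.single k 1}) with hSgen
  have hpd : ∀ i : Fin n, pderiv i (mono α 1)
      = monomial (s - Finsupp.single i 1) ((α i : ℂ)) := by
    intro i
    rw [mono, pderiv_monomial, one_mul]
    rfl
  have hXmono : ∀ (i : Fin n) (hi : α i ≠ 0) (c : ℂ),
      (X i : MvPolynomial (Fin n) ℂ) * monomial (s - Finsupp.single i 1) c
        = monomial s c := by
    intro i hi c
    have hle : Finsupp.single i 1 ≤ s := by
      rw [Finsupp.single_le_iff, hsa]; omega
    rw [← pow_one (X i : MvPolynomial (Fin n) ℂ), ← monomial_single_add,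
      add_tsub_cancel_of_le hle]
  -- a helper for sums against Pi.single
  have hsingle_sum : ∀ (i : Fin n) (A : MvPolynomial (Fin n) ℂ)
      (F : Fin n → MvPolynomial (Fin n) ℂ),
      (∑ k, (Pi.single i A : Fin n → MvPolynomial (Fin n) ℂ) k * F k) = A * F i := by
    intro i A F
    rw [Finset.sum_eq_single i]
    · rw [Pi.single_eq_same]
    · intro b _ hb
      rw [Pi.single_eq_of_ne hb, zero_mul]
    · intro h; exact absurd (Finset.mem_univ i) h
  constructor
  · -- hard direction
    intro h0
    -- reduce to the case where g is supported on the support of α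
    set g1 : Fin n → MvPolynomial (Fin n) ℂ := fun i => if α i = 0 then 0 else g i with hg1
    set g2 : Fin n → MvPolynomial (Fin n) ℂ := fun i => if α i = 0 then g i else 0 with hg2
    have hsplit : g = g1 + g2 := by
      funext i
      by_cases hi : α i = 0 <;> simp [hg1, hg2, hi]
    have hg2mem : g2 ∈ Submodule.span (MvPolynomial (Fin n) ℂ) Sgen := by
      have h1 : g2 = ∑ i, Pi.single i (g2 i) := (Finset.univ_sum_single g2).symm
      rw [h1]
      refine Submodule.sum_mem _ fun i _ => ?_
      by_cases hi : α i = 0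
      · have h2 : Pi.single i (g2 i)
            = g2 i • (Pi.single i 1 : Fin n → MvPolynomial (Fin n) ℂ) := by
          funext j
          by_cases hji : j = i
          · subst hji; simp
          · simp [Pi.single_eq_of_ne hji]
        rw [h2]
        exact Submodule.smul_mem _ _ (Submodule.subset_span (Or.inr ⟨i, hi, rfl⟩))
      · have h3 : g2 i = 0 := by simp [hg2, hi]
        rw [h3]
        simp
    have hg10 : ∀ i, α i = 0 → g1 i = 0 := by intro i hi; simp [hg1, hi]
    have hsum1 : ∑ i, g1 i * monomial (s - Finsupp.single i 1) ((α i : ℂ)) = 0 := by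
      rw [← h0]
      apply Finset.sum_congr rfl
      intro i _
      rw [hpd i]
      by_cases hi : α i = 0
      · rw [hg10 i hi, hi]
        simp
      · rw [hg1]
        simp [hi]
    -- divisibility: X i ∣ g1 i for all i in the support
    have hdvd : ∀ i : Fin n, α i ≠ 0 → (X i : MvPolynomial (Fin n) ℂ) ∣ g1 i := by
      intro i hi
      have h1 : (X i : MvPolynomial (Fin n) ℂ) ^ α i
          ∣ g1 i * monomial (s - Finsupp.single i 1) ((α i : ℂ)) := by
        have heq : g1 i * monomial (s - Finsupp.single i 1) ((α i : ℂ))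
            = - ∑ j ∈ Finset.univ.erase i,
                g1 j * monomial (s - Finsupp.single j 1) ((α j : ℂ)) := by
          have h2 := Finset.add_sum_erase Finset.univ
            (fun j => g1 j * monomial (s - Finsupp.single j 1) ((α j : ℂ)))
            (Finset.mem_univ i)
          rw [hsum1] at h2
          linear_combination h2
        rw [heq, dvd_neg]
        apply Finset.dvd_sum
        intro j hj
        have hji : j ≠ i := Finset.ne_of_mem_erase hj
        by_cases hj0 : α j = 0
        · simp [hj0]
        · apply Dvd.dvd.mul_left
          rw [X_pow_eq_monomial]
          refine monomial_dvd_monomial.mpr ⟨Or.inr ?_, one_dvd _⟩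
          rw [Finsupp.single_le_iff, Finsupp.tsub_apply, Finsupp.single_apply,
            if_neg hji, hsa]
          omega
      -- rewrite the monomial as a product
      have hms : s - Finsupp.single i 1
          = Finsupp.single i (α i - 1) + (s - Finsupp.single i (α i)) := by
        ext j
        simp only [Finsupp.coe_add, Pi.add_apply, Finsupp.tsub_apply, Finsupp.single_apply]
        by_cases hj : i = j
        · subst hj
          simp only [eq_self_iff_true, if_true, hsa]
          omega
        · simp only [if_neg hj]
          omega
      have hmono : monomial (s - Finsupp.single i 1) ((α i : ℂ))
          = C ((α i : ℕ) : ℂ) * ((X i : MvPolynomial (Fin n) ℂ) ^ (α i - 1)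
              * monomial (s - Finsupp.single i (α i)) 1) := by
        rw [hms, X_pow_eq_monomial, monomial_mul, one_mul, C_mul_monomial, mul_one]
      rw [hmono] at h1
      have hα1 : α i = (α i - 1) + 1 := (Nat.succ_pred_eq_of_pos (Nat.pos_of_ne_zero hi)).symm
      obtain ⟨c, hc⟩ := h1
      have hc2 : (X i : MvPolynomial (Fin n) ℂ) ^ (α i - 1) * (g1 i * C ((α i : ℕ) : ℂ)
            * monomial (s - Finsupp.single i (α i)) 1)
          = (X i : MvPolynomial (Fin n) ℂ) ^ (α i - 1) * (X i * c) := by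
        calc (X i : MvPolynomial (Fin n) ℂ) ^ (α i - 1) * (g1 i * C ((α i : ℕ) : ℂ)
              * monomial (s - Finsupp.single i (α i)) 1)
            = g1 i * (C ((α i : ℕ) : ℂ) * ((X i : MvPolynomial (Fin n) ℂ) ^ (α i - 1)
                * monomial (s - Finsupp.single i (α i)) 1)) := by ring
          _ = X i ^ α i * c := hc
          _ = (X i : MvPolynomial (Fin n) ℂ) ^ (α i - 1) * (X i * c) := by
              have hpow : (X i : MvPolynomial (Fin n) ℂ) ^ α i
                  = (X i : MvPolynomial (Fin n) ℂ) ^ (α i - 1) * X i := by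
                conv_lhs => rw [hα1]
                rw [pow_succ]
              rw [hpow]; ring
      have hc3 := mul_left_cancel₀ (pow_ne_zero _ (X_ne_zero (R := ℂ) i)) hc2
      -- now use killVar
      have hk : killVar i (g1 i * C ((α i : ℕ) : ℂ)
          * monomial (s - Finsupp.single i (α i)) 1) = 0 :=
        (X_dvd_iff_killVar i _).mp ⟨c, hc3⟩
      rw [map_mul, map_mul] at hk
      have hkc : killVar i (C ((α i : ℕ) : ℂ)) = C ((α i : ℕ) : ℂ) := by
        simp [killVar]
      have hkm : killVar i (monomial (s - Finsupp.single i (α i)) 1)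
          = monomial (s - Finsupp.single i (α i)) 1 := by
        apply killVar_monomial
        rw [Finsupp.tsub_apply, Finsupp.single_eq_same, hsa]
        omega
      rw [hkc, hkm] at hk
      rcases mul_eq_zero.mp hk with h | h
      · rcases mul_eq_zero.mp h with h' | h'
        · exact (X_dvd_iff_killVar i _).mpr h'
        · exact absurd h' (by simp [hi])
      · exact absurd h (by simp [monomial_eq_zero])
    -- choose quotients
    have hq : ∀ i : Fin n, ∃ q : MvPolynomial (Fin n) ℂ, g1 i = X i * q := by
      intro i
      by_cases hi : α i = 0
      · exact ⟨0, by rw [hg10 i hi, mul_zero]⟩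
      · exact hdvd i hi
    choose q hqe using hq
    -- the linear relation among the quotients
    have hrel : ∑ i, C ((α i : ℕ) : ℂ) * q i = 0 := by
      have hterm : ∀ i : Fin n, g1 i * monomial (s - Finsupp.single i 1) ((α i : ℂ))
          = (C ((α i : ℕ) : ℂ) * q i) * monomial s 1 := by
        intro i
        rw [hqe i]
        by_cases hi : α i = 0
        · simp [hi]
        · calc X i * q i * monomial (s - Finsupp.single i 1) ((α i : ℂ))
              = q i * ((X i : MvPolynomial (Fin n) ℂ)
                  * monomial (s - Finsupp.single i 1) ((α i : ℂ))) := by ring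
            _ = q i * monomial s ((α i : ℂ)) := by rw [hXmono i hi]
            _ = (C ((α i : ℕ) : ℂ) * q i) * monomial s 1 := by
                have hCm : C ((α i : ℕ) : ℂ) * monomial s (1 : ℂ) = monomial s ((α i : ℕ) : ℂ) := by
                  rw [C_mul_monomial, mul_one]
                rw [← hCm]; ring
      have h2 : (∑ i, C ((α i : ℕ) : ℂ) * q i) * monomial s 1 = 0 := by
        rw [Finset.sum_mul, ← hsum1]
        exact Finset.sum_congr rfl fun i _ => (hterm i).symm
      rcases mul_eq_zero.mp h2 with h | h
      · exact h
      · exact absurd h (by simp [monomial_eq_zero])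
    -- pick an index in the support of α
    obtain ⟨i0, hi0⟩ : ∃ i, α i ≠ 0 := by
      by_contra hno
      push_neg at hno
      exact hα (funext fun i => hno i)
    have ha0 : ((α i0 : ℕ) : ℂ) ≠ 0 := Nat.cast_ne_zero.mpr hi0
    have hCC : C (((α i0 : ℕ) : ℂ))⁻¹ * C (((α i0 : ℕ) : ℂ)) = (1 : MvPolynomial (Fin n) ℂ) := by
      rw [← C_mul, inv_mul_cancel₀ ha0, C_1]
    set cf : Fin n → MvPolynomial (Fin n) ℂ := fun i => C (((α i0 : ℕ) : ℂ))⁻¹ * q i with hcf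
    set w : Fin n → (Fin n → MvPolynomial (Fin n) ℂ) := fun i => if α i = 0 then 0 else
      (Pi.single i (C ((α i0 : ℕ) : ℂ) * X i) - Pi.single i0 (C ((α i : ℕ) : ℂ) * X i0))
      with hw
    have hmain : g1 = ∑ i, cf i • w i := by
      funext j
      rw [Finset.sum_apply]
      have hterm : ∀ i : Fin n, (cf i • w i) j
          = cf i * ((Pi.single i (C ((α i0 : ℕ) : ℂ) * X i) : Fin n → MvPolynomial (Fin n) ℂ) j)
            - cf i * ((Pi.single i0 (C ((α i : ℕ) : ℂ) * X i0)
                : Fin n → MvPolynomial (Fin n) ℂ) j) := by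
        intro i
        by_cases hi : α i = 0
        · have hqi : q i = 0 := by
            have h4 := hqe i
            rw [hg10 i hi] at h4
            exact (mul_eq_zero.mp h4.symm).resolve_left (X_ne_zero i)
          simp [hw, hi, hcf, hqi]
        · simp only [hw, if_neg hi, Pi.smul_apply, Pi.sub_apply, smul_eq_mul]
          ring
      rw [Finset.sum_congr rfl fun i _ => hterm i, Finset.sum_sub_distrib]
      have hS1 : (∑ i, cf i * ((Pi.single i (C ((α i0 : ℕ) : ℂ) * X i)
            : Fin n → MvPolynomial (Fin n) ℂ) j))
          = cf j * (C ((α i0 : ℕ) : ℂ) * X j) := by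
        rw [Finset.sum_eq_single j]
        · rw [Pi.single_eq_same]
        · intro b _ hb
          rw [Pi.single_eq_of_ne (Ne.symm hb), mul_zero]
        · intro h; exact absurd (Finset.mem_univ j) h
      rw [hS1]
      by_cases hj : j = i0
      · have hS2 : (∑ i, cf i * ((Pi.single i0 (C ((α i : ℕ) : ℂ) * X i0)
              : Fin n → MvPolynomial (Fin n) ℂ) j)) = 0 := by
          have h5 : ∀ i : Fin n, cf i * ((Pi.single i0 (C ((α i : ℕ) : ℂ) * X i0)
                : Fin n → MvPolynomial (Fin n) ℂ) j)
              = (C (((α i0 : ℕ) : ℂ))⁻¹ * X i0) * (C ((α i : ℕ) : ℂ) * q i) := by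
            intro i
            rw [hj, Pi.single_eq_same]
            simp only [hcf]
            ring
          rw [Finset.sum_congr rfl fun i _ => h5 i, ← Finset.mul_sum, hrel, mul_zero]
        rw [hS2, sub_zero, hqe j]
        simp only [hcf]
        linear_combination (-(q j * X j)) * hCC
      · have hS2 : (∑ i, cf i * ((Pi.single i0 (C ((α i : ℕ) : ℂ) * X i0)
              : Fin n → MvPolynomial (Fin n) ℂ) j)) = 0 := by
          apply Finset.sum_eq_zero
          intro i _
          rw [Pi.single_eq_of_ne hj, mul_zero]
        rw [hS2, sub_zero, hqe j]
        simp only [hcf]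
        linear_combination (-(q j * X j)) * hCC
    have hg1mem : g1 ∈ Submodule.span (MvPolynomial (Fin n) ℂ) Sgen := by
      rw [hmain]
      refine Submodule.sum_smul_mem _ _ fun i _ => ?_
      by_cases hi : α i = 0
      · have : w i = 0 := by simp [hw, hi]
        rw [this]
        simp
      · refine Submodule.subset_span ?_
        rw [hSgen]
        exact Or.inl ⟨i, i0, hi, hi0, by simp [hw, hi]⟩
    rw [hsplit]
    exact Submodule.add_mem _ hg1mem hg2mem
  · -- easy direction
    intro hg
    induction hg using Submodule.span_induction with
    | mem v hv =>
      rcases hv with ⟨i, j, hi, hj, rfl⟩ | ⟨k, hk, rfl⟩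
      · have h1 : ∀ k, ((Pi.single i (C ((α j : ℕ) : ℂ) * X i)
            - Pi.single j (C ((α i : ℕ) : ℂ) * X j) : Fin n → MvPolynomial (Fin n) ℂ)) k
            = (Pi.single i (C ((α j : ℕ) : ℂ) * X i) : Fin n → MvPolynomial (Fin n) ℂ) k
              - (Pi.single j (C ((α i : ℕ) : ℂ) * X j)
                  : Fin n → MvPolynomial (Fin n) ℂ) k := fun k => rfl
        simp only [h1, sub_mul, Finset.sum_sub_distrib]
        rw [hsingle_sum, hsingle_sum, hpd i, hpd j]
        have hXi : (C ((α j : ℕ) : ℂ) * X i) * monomial (s - Finsupp.single i 1) ((α i : ℂ))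
            = monomial s (((α j : ℕ) : ℂ) * ((α i : ℕ) : ℂ)) := by
          rw [mul_assoc, hXmono i hi, C_mul_monomial]
        have hXj : (C ((α i : ℕ) : ℂ) * X j) * monomial (s - Finsupp.single j 1) ((α j : ℂ))
            = monomial s (((α i : ℕ) : ℂ) * ((α j : ℕ) : ℂ)) := by
          rw [mul_assoc, hXmono j hj, C_mul_monomial]
        rw [hXi, hXj, mul_comm (((α j : ℕ) : ℂ)) (((α i : ℕ) : ℂ)), sub_self]
      · rw [hsingle_sum, hpd k, hk]
        simp
    | zero => simp
    | add x y hx hy hx' hy' =>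
      simp only [Pi.add_apply, add_mul, Finset.sum_add_distrib, hx', hy', add_zero]
    | smul a x hx hx' =>
      simp only [Pi.smul_apply, smul_eq_mul, mul_assoc, ← Finset.mul_sum, hx', mul_zero]
end
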